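/- Let 0 < ε < 1/2. There exists a constant c(ε) > 0 such that for all x, y ∈ [ε, 1−ε], |√2·sin(πx) − √2·sin(πy)|² + |√2·sin(2πx) − √2·sin(2πy)|² ≥ c(ε)·|x − y|². -/

import Mathlib

open Real
set_option maxHeartbeats 1000000

theorem eigenfunctions_bilipschitz_below (ε : ℝ) (hε : 0 < ε) (hε' : ε < 1 / 2) :
    ∃ c > 0, ∀ x ∈ Set.Icc ε (1 - ε), ∀ y ∈ Set.Icc ε (1 - ε),
      |Real.sqrt 2 * Real.sin (π * x) - Real.sqrt 2 * Real.sin (π * y)| ^ 2 +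
        |Real.sqrt 2 * Real.sin (2 * π * x) - Real.sqrt 2 * Real.sin (2 * π * y)| ^ 2 ≥
      c * |x - y| ^ 2 := by
  have hπ := Real.pi_pos
  have hE0 : 0 < Real.sin (π * ε) := by
    apply Real.sin_pos_of_pos_of_lt_pi
    · positivity
    · nlinarith
  have hE1 : Real.sin (π * ε) ≤ 1 := Real.sin_le_one _
  refine ⟨Real.sin (π * ε) ^ 2, by positivity, ?_⟩
  intro x hx y hy
  obtain ⟨hx1, hx2⟩ := hx
  obtain ⟨hy1, hy2⟩ := hy
  set a : ℝ := π * (x - y) / 2 with ha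
  set b : ℝ := π * (x + y) / 2 with hb
  set E : ℝ := Real.sin (π * ε) with hEdef
  -- |a| bounds
  have hxy : |x - y| ≤ 1 - 2 * ε := by
    rw [abs_le]; constructor <;> linarith
  have haabs : |a| = π * |x - y| / 2 := by
    rw [ha, abs_div, abs_mul, abs_of_pos hπ]
    norm_num
  have ha2 : |a| ≤ π / 2 - π * ε := by
    rw [haabs]; nlinarith [abs_nonneg (x - y)]
  have ha3 : |a| ≤ π / 2 := by nlinarith
  -- sin a squared lower bound
  have hsina : |x - y| ≤ Real.sin |a| := by
    have := Real.mul_le_sin (x := |a|) (abs_nonneg _) ha3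
    rw [haabs] at this ⊢
    calc |x - y| = 2 / π * (π * |x - y| / 2) := by field_simp
    _ ≤ _ := this
  have hsinsq : (x - y) ^ 2 ≤ Real.sin a ^ 2 := by
    have h1 : Real.sin a ^ 2 = Real.sin |a| ^ 2 := by
      rcases abs_choice a with h | h
      · rw [h]
      · rw [h, Real.sin_neg]; ring
    rw [h1]
    calc (x - y) ^ 2 = |x - y| ^ 2 := (sq_abs _).symm
    _ ≤ Real.sin |a| ^ 2 := by nlinarith [abs_nonneg (x - y)]
  -- cos a lower bound
  have hcosa : E ≤ Real.cos a := by
    have h1 : Real.cos a = Real.cos |a| := (Real.cos_abs a).symm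
    rw [h1]
    have h2 : Real.cos (π / 2 - π * ε) ≤ Real.cos |a| :=
      Real.cos_le_cos_of_nonneg_of_le_pi (abs_nonneg _) (by nlinarith) ha2
    rwa [Real.cos_pi_div_two_sub] at h2
  -- rewrite LHS
  have e1 : Real.sin (π * x) - Real.sin (π * y) = 2 * Real.sin a * Real.cos b := by
    rw [Real.sin_sub_sin, ha, hb]; ring_nf
  have e2 : Real.sin (2 * π * x) - Real.sin (2 * π * y) =
      2 * Real.sin (2 * a) * Real.cos (2 * b) := by
    rw [Real.sin_sub_sin, ha, hb]; ring_nf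
  have hs2 : Real.sqrt 2 ^ 2 = 2 := Real.sq_sqrt (by norm_num)
  have key : ∀ q E' : ℝ, 0 ≤ q → 0 ≤ E' → E' ≤ 1 →
      E' ^ 2 ≤ 8 * q + 32 * E' ^ 2 * (2 * q - 1) ^ 2 := by
    intro q E' hq hE' hE'1
    have hu : 0 ≤ E' ^ 2 := sq_nonneg _
    rcases le_or_gt (1/4 : ℝ) q with h | h
    · nlinarith [mul_nonneg hu (sq_nonneg (2 * q - 1))]
    · have h4 : (1/4 : ℝ) ≤ (2 * q - 1) ^ 2 := by nlinarith
      nlinarith [mul_le_mul_of_nonneg_left h4 hu]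
  have hq := key (Real.cos b ^ 2) E (sq_nonneg _) hE0.le hE1
  have hcos2b : Real.cos (2 * b) = 2 * Real.cos b ^ 2 - 1 := Real.cos_two_mul b
  have hsin2a : Real.sin (2 * a) = 2 * Real.sin a * Real.cos a := Real.sin_two_mul a
  rw [sq_abs, sq_abs, sq_abs]
  rw [show Real.sqrt 2 * Real.sin (π * x) - Real.sqrt 2 * Real.sin (π * y)
      = Real.sqrt 2 * (Real.sin (π * x) - Real.sin (π * y)) by ring,
    show Real.sqrt 2 * Real.sin (2 * π * x) - Real.sqrt 2 * Real.sin (2 * π * y)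
      = Real.sqrt 2 * (Real.sin (2 * π * x) - Real.sin (2 * π * y)) by ring,
    mul_pow, mul_pow, hs2, e1, e2, hsin2a, hcos2b]
  have hcasq : E ^ 2 ≤ Real.cos a ^ 2 := by nlinarith
  nlinarith [sq_nonneg (Real.sin a), sq_nonneg (x - y), sq_nonneg E,
    mul_le_mul_of_nonneg_left hq (sq_nonneg (Real.sin a)),
    mul_le_mul_of_nonneg_right hsinsq (sq_nonneg E),
    mul_le_mul_of_nonneg_left hcasq (mul_nonneg (sq_nonneg (Real.sin a)) (mul_nonneg (by norm_num : (0:ℝ) ≤ 32) (sq_nonneg (2 * Real.cos b ^ 2 - 1))))]
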